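/- Two elements a ⊗ l sum to zero in M ⊗_R L (i.e. ∑ a_i ⊗ l_i = 0 for tuples ā from the right module M and l̄ from the left module L) if and only if there is a pp formula φ(x̄) for right R-modules such that ā ∈ φ(M) and l̄ ∈ Dφ(L), where Dφ is the elementary dual pp formula. -/

import Mathlib

/-!
STATEMENT 10 (Herzog's criterion): `∑ i, a i ⊗ l i = 0` in `M ⊗ L` iff there is a pp
formula `φ` with `ā ∈ φ(M)` and `l̄ ∈ Dφ(L)`, where `Dφ` is the elementary dual.
-/

open TensorProduct

universe u v

/-- A pp formula in `n` free variables: an existentially quantified finite system of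
`R`-linear equations `∑ i, A i j • x i + ∑ l, B l j • y l = 0` (j-th equation). -/
structure PPFormula (R : Type u) [Ring R] (n : ℕ) where
  k : ℕ
  m : ℕ
  A : Fin n → Fin m → R
  B : Fin k → Fin m → R

/-- The solution set of a pp formula in a module. -/
def PPFormula.sol {R : Type u} [Ring R] {n : ℕ} (φ : PPFormula R n)
    (M : Type v) [AddCommGroup M] [Module R M] : Set (Fin n → M) :=
  { a | ∃ b : Fin φ.k → M, ∀ j,
      (∑ i, φ.A i j • a i) + (∑ l, φ.B l j • b l) = 0 }

/-- The elementary dual `Dφ` of a pp formula `φ(x̄) = ∃ȳ (x̄A + ȳB = 0)`, namely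
`Dφ(x̄) = ∃z̄ (x̄ = Az̄ ∧ Bz̄ = 0)`; e.g. the dual of `xr = 0` is `r ∣ x`. -/
def PPFormula.dual {R : Type u} [Ring R] {n : ℕ} (φ : PPFormula R n) : PPFormula R n where
  k := φ.m
  m := n + φ.k
  A := fun i j => Fin.addCases (fun i₀ => if i = i₀ then (1 : R) else 0) (fun _ => (0 : R)) j
  B := fun z j => Fin.addCases (fun i₀ => -φ.A i₀ z) (fun l₀ => φ.B l₀ z) j

theorem herzog_criterion (R : Type u) [CommRing R]
    (M : Type v) [AddCommGroup M] [Module R M] (L : Type v) [AddCommGroup L] [Module R L]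
    (n : ℕ) (a : Fin n → M) (l : Fin n → L) :
    (∑ i, a i ⊗ₜ[R] l i) = (0 : TensorProduct R M L) ↔
      ∃ φ : PPFormula R n, a ∈ φ.sol M ∧ l ∈ φ.dual.sol L := by
  classical
  constructor
  · -- Forward direction: construct a pp formula from a free presentation.
    intro h
    set g : Fin n ⊕ M → M := Sum.elim a id with hg
    set G : ((Fin n ⊕ M) →₀ R) →ₗ[R] M := Finsupp.linearCombination R g with hG
    have G_surj : Function.Surjective G := fun x =>
      ⟨Finsupp.single (Sum.inr x) 1, by simp [hG, hg]⟩
    have e_ker : (∑ i, Finsupp.single (Sum.inl i : Fin n ⊕ M) (1 : R) ⊗ₜ[R] l i)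
        ∈ LinearMap.ker (LinearMap.rTensor L G) := by
      rw [LinearMap.mem_ker, map_sum]
      simpa [hG, hg] using h
    have e_range : (∑ i, Finsupp.single (Sum.inl i : Fin n ⊕ M) (1 : R) ⊗ₜ[R] l i)
        ∈ LinearMap.range (LinearMap.rTensor L (LinearMap.ker G).subtype) :=
      (rTensor_exact (M := ↥(LinearMap.ker G)) L G.exact_subtype_ker_map G_surj).linearMap_ker_eq
        ▸ e_ker
    obtain ⟨kn, hkn⟩ := e_range
    obtain ⟨ma, rfl⟩ := TensorProduct.exists_finset kn
    -- coefficient extraction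
    have hcoef : ∀ x : Fin n ⊕ M,
        (∑ p ∈ ma, ((p.1 : (Fin n ⊕ M) →₀ R) x) • p.2)
          = ∑ i, (Finsupp.single (Sum.inl i : Fin n ⊕ M) (1 : R)) x • l i := by
      intro x
      have h2 := congrArg (fun z => TensorProduct.finsuppScalarLeft R L (Fin n ⊕ M) z x) hkn
      simpa [map_sum, TensorProduct.finsuppScalarLeft_apply_tmul_apply] using h2
    set T : Finset M :=
      ma.sup (fun p => (p.1.1 : (Fin n ⊕ M) →₀ R).support.image
        (Sum.elim (fun _ => (0 : M)) id)) with hT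
    set em : Fin ma.card ≃ ↥ma := ma.equivFin.symm with hem
    set et : Fin T.card ≃ ↥T := T.equivFin.symm with het
    set φ₀ : PPFormula R n := ⟨T.card, ma.card,
        fun i j => ((em j : (↥(LinearMap.ker G) × L)).1 : (Fin n ⊕ M) →₀ R) (Sum.inl i),
        fun t j => ((em j : (↥(LinearMap.ker G) × L)).1 : (Fin n ⊕ M) →₀ R)
          (Sum.inr (et t : M))⟩ with hφ
    refine ⟨φ₀, ?_, ?_⟩
    · -- a ∈ φ.sol M
      refine ⟨fun t => (et t : M), fun j => ?_⟩
      set p : ↥(LinearMap.ker G) × L := (em j : (↥(LinearMap.ker G) × L)) with hp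
      have hpm : p ∈ ma := (em j).2
      set k : (Fin n ⊕ M) →₀ R := (p.1 : (Fin n ⊕ M) →₀ R) with hk
      have hGk : G k = 0 := p.1.2
      have hsupp : k.support ⊆ Finset.univ.disjSum T := by
        intro x hx
        rcases x with i | t
        · simp [Finset.inl_mem_disjSum]
        · rw [Finset.inr_mem_disjSum]
          refine Finset.le_sup (f := fun p => (p.1.1 : (Fin n ⊕ M) →₀ R).support.image
            (Sum.elim (fun _ => (0 : M)) id)) hpm ?_
          exact Finset.mem_image.mpr ⟨Sum.inr t, hx, rfl⟩
      have hGk' : ∑ x ∈ Finset.univ.disjSum T, k x • g x = 0 := by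
        rw [← hGk, hG, Finsupp.linearCombination_apply]
        exact (Finsupp.sum_of_support_subset k hsupp (fun x r => r • g x)
          (fun x _ => zero_smul R (g x))).symm
      rw [Finset.sum_disjSum] at hGk'
      have hTsum : ∑ t ∈ T, k (Sum.inr t) • t
          = ∑ t : Fin T.card, k (Sum.inr (et t : M)) • (et t : M) := by
        rw [← Finset.sum_coe_sort T (fun t => k (Sum.inr t) • t)]
        exact (Equiv.sum_comp et (fun t : ↥T => k (Sum.inr (t : M)) • (t : M))).symm
      simp only [hg, Sum.elim_inl, Sum.elim_inr, id] at hGk'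
      rw [hTsum] at hGk'
      exact hGk'
    · -- l ∈ φ.dual.sol L
      refine ⟨fun j => (em j : (↥(LinearMap.ker G) × L)).2, fun j => ?_⟩
      have hmsum : ∀ x : Fin n ⊕ M,
          ∑ z : Fin ma.card, ((em z : (↥(LinearMap.ker G) × L)).1 : (Fin n ⊕ M) →₀ R) x
              • (em z : (↥(LinearMap.ker G) × L)).2
            = ∑ p ∈ ma, ((p.1 : (Fin n ⊕ M) →₀ R) x) • p.2 := by
        intro x
        rw [← Finset.sum_coe_sort ma (fun p => ((p.1 : (Fin n ⊕ M) →₀ R) x) • p.2)]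
        exact Equiv.sum_comp em
          (fun p : ↥ma => (((p : (↥(LinearMap.ker G) × L)).1 : (Fin n ⊕ M) →₀ R) x)
            • (p : (↥(LinearMap.ker G) × L)).2)
      refine Fin.addCases (motive := fun j =>
        (∑ i, φ₀.dual.A i j • l i) + (∑ z, φ₀.dual.B z j •
          (fun j' => (em j' : (↥(LinearMap.ker G) × L)).2) z) = 0) ?_ ?_ j
      · intro i₀
        simp only [hφ, PPFormula.dual, Fin.addCases_left]
        have hc := hcoef (Sum.inl i₀)
        rw [← hmsum (Sum.inl i₀)] at hc
        simp only [Finsupp.single_apply, Sum.inl.injEq] at hc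
        simp only [ite_smul, one_smul, zero_smul, neg_smul, Finset.sum_neg_distrib,
          Finset.sum_ite_eq', Finset.mem_univ, if_true] at hc ⊢
        exact add_neg_eq_zero.mpr hc.symm
      · intro t₀
        simp only [hφ, PPFormula.dual, Fin.addCases_right]
        have hc := hcoef (Sum.inr (et t₀ : M))
        rw [← hmsum (Sum.inr (et t₀ : M))] at hc
        simp [Finsupp.single_apply] at hc
        simp only [zero_smul, Finset.sum_const_zero, zero_add]
        exact hc
  · -- Backward direction: a computation.
    rintro ⟨φ, ⟨b, hb⟩, ⟨c, hc⟩⟩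
    have h2 : ∀ i₀, l i₀ = ∑ z, φ.A i₀ z • c z := by
      intro i₀
      have hd := hc (Fin.castAdd φ.k i₀)
      simp only [PPFormula.dual, Fin.addCases_left, ite_smul, one_smul, zero_smul,
        neg_smul, Finset.sum_neg_distrib, Finset.sum_ite_eq', Finset.mem_univ, if_true] at hd
      rwa [add_neg_eq_zero] at hd
    have h3 : ∀ t₀, ∑ z, φ.B t₀ z • c z = 0 := by
      intro t₀
      have hd := hc (Fin.natAdd n t₀)
      simp [PPFormula.dual, Fin.addCases_right] at hd
      exact hd
    calc ∑ i, a i ⊗ₜ[R] l i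
        = ∑ i, ∑ z, φ.A i z • (a i ⊗ₜ[R] c z) := by
          simp_rw [h2, TensorProduct.tmul_sum, TensorProduct.tmul_smul]
      _ = ∑ z, (∑ i, φ.A i z • a i) ⊗ₜ[R] c z := by
          rw [Finset.sum_comm]
          simp_rw [TensorProduct.sum_tmul, TensorProduct.smul_tmul']
      _ = ∑ z, (-∑ t, φ.B t z • b t) ⊗ₜ[R] c z := by
          refine Finset.sum_congr rfl fun z _ => ?_
          rw [eq_neg_of_add_eq_zero_left (hb z)]
      _ = -∑ t, b t ⊗ₜ[R] (∑ z, φ.B t z • c z) := by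
          simp_rw [TensorProduct.neg_tmul, TensorProduct.sum_tmul, Finset.sum_neg_distrib,
            TensorProduct.smul_tmul, TensorProduct.tmul_sum]
          rw [Finset.sum_comm]
      _ = 0 := by simp [h3]
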